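/- Let m = p_1^{k_1} ··· p_h^{k_h} and f(x_l,...,x_r) = (p_1 p_2 ··· p_h)·Σ_{i=l}^{r-1} λ_i x_i + λ_r x_r (mod m) with gcd(λ_r, m) = 1 and 0 < l < r. Then the cellular automaton T_{f[l,r]} over Z_m is invertible and is a Bernoulli automorphism with respect to the uniform Bernoulli measure. -/

import Mathlib

open MeasureTheory
open scoped ENNReal
instance (m : ℕ) : MeasurableSpace (ZMod m) := ⊤
instance (m : ℕ) : Countable (ZMod m) := by
  cases m
  · exact (inferInstance : Countable ℤ)
  · exact (inferInstance : Countable (Fin _))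
instance (m : ℕ) : MeasurableSingletonClass (ZMod m) :=
  ⟨fun _ => MeasurableSpace.measurableSet_top⟩
instance (m : ℕ) : MeasurableMul₂ (ZMod m) := ⟨measurable_of_countable _⟩
instance (m : ℕ) : MeasurableAdd₂ (ZMod m) := ⟨measurable_of_countable _⟩
instance (m : ℕ) : MeasurableSub₂ (ZMod m) := ⟨measurable_of_countable _⟩

section Meas
variable {m : ℕ}

theorem cyl_measurable (a b : ℤ) (v : ℤ → ZMod m) :
    MeasurableSet {x : ℤ → ZMod m | ∀ i ∈ Finset.Icc a b, x i = v i} := by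
  have h : {x : ℤ → ZMod m | ∀ i ∈ Finset.Icc a b, x i = v i}
      = ⋂ i ∈ (Finset.Icc a b : Finset ℤ), (fun x : ℤ → ZMod m => x i) ⁻¹' {v i} := by
    ext x; simp [Set.mem_iInter]
  rw [h]
  exact MeasurableSet.biInter (Finset.Icc a b).countable_toSet
    (fun i _ => (measurable_pi_apply i) (measurableSet_singleton (v i)))

/-- The π-system of symmetric interval cylinders. -/
def cylC (m : ℕ) : Set (Set (ℤ → ZMod m)) :=
  {S | S = ∅ ∨ ∃ (k : ℕ) (v : ℤ → ZMod m),
    S = {x | ∀ i ∈ Finset.Icc (-(k : ℤ)) (k : ℤ), x i = v i}}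

theorem cylC_pi : IsPiSystem (cylC m) := by
  rintro S hS S' hS' hne
  rcases hS with rfl | ⟨k, v, rfl⟩
  · simp at hne
  rcases hS' with rfl | ⟨k', v', rfl⟩
  · simp at hne
  obtain ⟨x₀, hx₀, hx₀'⟩ := hne
  right
  refine ⟨max k k', x₀, ?_⟩
  ext x
  simp only [Set.mem_inter_iff, Set.mem_setOf_eq]
  constructor
  · rintro ⟨h1, h2⟩ i hi
    rw [Finset.mem_Icc] at hi
    by_cases hik : i ∈ Finset.Icc (-(k : ℤ)) (k : ℤ)
    · rw [h1 i hik, hx₀ i hik]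
    · have hik' : i ∈ Finset.Icc (-(k' : ℤ)) (k' : ℤ) := by
        rw [Finset.mem_Icc] at hik ⊢; omega
      rw [h2 i hik', hx₀' i hik']
  · intro h
    constructor
    · intro i hi
      have hi' : i ∈ Finset.Icc (-((max k k' : ℕ) : ℤ)) ((max k k' : ℕ) : ℤ) := by
        rw [Finset.mem_Icc] at hi ⊢
        constructor <;> [ (have := hi.1) ; (have := hi.2)] <;>
          · have hk : (k : ℤ) ≤ ((max k k' : ℕ) : ℤ) := by exact_mod_cast Nat.le_max_left k k'
            omega
      rw [h i hi', hx₀ i hi]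
    · intro i hi
      have hi' : i ∈ Finset.Icc (-((max k k' : ℕ) : ℤ)) ((max k k' : ℕ) : ℤ) := by
        rw [Finset.mem_Icc] at hi ⊢
        constructor <;> [ (have := hi.1) ; (have := hi.2)] <;>
          · have hk : (k' : ℤ) ≤ ((max k k' : ℕ) : ℤ) := by exact_mod_cast Nat.le_max_right k k'
            omega
      rw [h i hi', hx₀' i hi]

theorem cylC_gen :
    (inferInstance : MeasurableSpace (ℤ → ZMod m))
      = MeasurableSpace.generateFrom (cylC m) := by
  apply le_antisymm
  · -- pi σ-algebra ≤ generated
    rw [show (inferInstance : MeasurableSpace (ℤ → ZMod m)) = MeasurableSpace.pi from rfl]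
    refine iSup_le fun i => ?_
    rw [MeasurableSpace.comap_le_iff_le_map]
    intro s _
    -- show preimage of s under eval i is generated
    have hs : (fun x : ℤ → ZMod m => x i) ⁻¹' s = ⋃ a ∈ s, {x : ℤ → ZMod m | x i = a} := by
      ext x; simp
    rw [MeasurableSpace.map_def, hs]
    refine MeasurableSet.biUnion s.to_countable fun a _ => ?_
    -- {x | x i = a} as countable union of cylinders
    set k : ℕ := i.natAbs
    have hik : i ∈ Finset.Icc (-(k : ℤ)) (k : ℤ) := by
      rw [Finset.mem_Icc]; omega
    classical
    have hset : {x : ℤ → ZMod m | x i = a}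
        = ⋃ (v : {v : (Finset.Icc (-(k : ℤ)) (k : ℤ) : Finset ℤ) → ZMod m // v ⟨i, hik⟩ = a}),
          {x : ℤ → ZMod m | ∀ j ∈ Finset.Icc (-(k : ℤ)) (k : ℤ),
            x j = (fun j' : ℤ => if h : j' ∈ Finset.Icc (-(k : ℤ)) (k : ℤ) then v.1 ⟨j', h⟩ else 0) j} := by
      ext x
      simp only [Set.mem_setOf_eq, Set.mem_iUnion]
      constructor
      · intro hxa
        refine ⟨⟨fun j => x j.1, hxa⟩, fun j hj => ?_⟩
        rw [dif_pos hj]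
      · rintro ⟨v, hv⟩
        have := hv i hik
        rw [dif_pos hik] at this
        rw [this, v.2]
    rw [hset]
    exact MeasurableSet.iUnion fun v =>
      MeasurableSpace.measurableSet_generateFrom (Or.inr ⟨k, _, rfl⟩)
  · refine MeasurableSpace.generateFrom_le fun S hS => ?_
    rcases hS with rfl | ⟨k, v, rfl⟩
    · exact MeasurableSet.empty
    · exact cyl_measurable _ _ v

theorem cyl_measure (μ : Measure (ℤ → ZMod m))
    (hμ : ∀ (a : ℤ) (s : ℕ) (j : ℕ → ZMod m),
      μ {x | ∀ t : ℕ, t ≤ s → x (a + (t : ℤ)) = j t} = ((m : ℝ≥0∞))⁻¹ ^ (s + 1))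
    (a b : ℤ) (hab : a ≤ b) (v : ℤ → ZMod m) :
    μ {x : ℤ → ZMod m | ∀ i ∈ Finset.Icc a b, x i = v i}
      = ((m : ℝ≥0∞))⁻¹ ^ (b + 1 - a).toNat := by
  have h := hμ a (b - a).toNat (fun t => v (a + t))
  have hset : {x : ℤ → ZMod m | ∀ t : ℕ, t ≤ (b - a).toNat → x (a + (t : ℤ)) = v (a + (t : ℤ))}
      = {x : ℤ → ZMod m | ∀ i ∈ Finset.Icc a b, x i = v i} := by
    ext x
    simp only [Set.mem_setOf_eq]
    constructor
    · intro hx i hi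
      rw [Finset.mem_Icc] at hi
      have h1 := hx (i - a).toNat (by omega)
      have h2 : a + ((i - a).toNat : ℤ) = i := by omega
      rwa [h2] at h1
    · intro hx t ht
      exact hx (a + (t : ℤ)) (Finset.mem_Icc.mpr ⟨by omega, by omega⟩)
  rw [hset] at h
  rw [h]
  congr 1
  omega

end Meas

noncomputable def CAmap (m : ℕ) (l r : ℤ) (lam : ℤ → ZMod m) (c : ZMod m)
    (x : ℤ → ZMod m) (n : ℤ) : ZMod m :=
  c * ∑ i ∈ Finset.Icc l (r - 1), lam i * x (n + i) + lam r * x (n + r)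

noncomputable def invIter (m : ℕ) (l r : ℤ) (lam : ℤ → ZMod m) (uinv c : ZMod m)
    (y : ℤ → ZMod m) : ℕ → ℤ → ZMod m
  | 0 => fun _ => 0
  | (j + 1) => fun k => uinv * (y (k - r) - c * ∑ t ∈ Finset.Icc l (r - 1),
      lam t * invIter m l r lam uinv c y j (k - r + t))

section Bij

variable {m : ℕ} {l r : ℤ} {lam : ℤ → ZMod m} {uinv c : ZMod m}

theorem CAmap_injective (hu1 : uinv * lam r = 1) {K : ℕ} (hcK : c ^ K = 0) :
    Function.Injective (CAmap m l r lam c) := by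
  intro x y hxy
  have hz : ∀ k : ℤ, lam r * (x k - y k)
      = c * ∑ i ∈ Finset.Icc l (r - 1), lam i * (y (k - r + i) - x (k - r + i)) := by
    intro k
    have h := congrFun hxy (k - r)
    simp only [CAmap] at h
    have hk : k - r + r = k := by ring
    rw [hk] at h
    have hsum : ∑ i ∈ Finset.Icc l (r - 1), lam i * (y (k - r + i) - x (k - r + i))
        = (∑ i ∈ Finset.Icc l (r - 1), lam i * y (k - r + i))
          - ∑ i ∈ Finset.Icc l (r - 1), lam i * x (k - r + i) := by
      rw [← Finset.sum_sub_distrib]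
      exact Finset.sum_congr rfl fun i _ => mul_sub _ _ _
    rw [hsum]
    linear_combination h
  have claim : ∀ j : ℕ, ∀ k : ℤ, ∃ w : ZMod m, x k - y k = c ^ j * w := by
    intro j
    induction j with
    | zero => exact fun k => ⟨x k - y k, by simp⟩
    | succ j ih =>
      choose w hw using ih
      intro k
      refine ⟨uinv * -∑ i ∈ Finset.Icc l (r - 1), lam i * w (k - r + i), ?_⟩
      have h1 := hz k
      have hsum : ∑ i ∈ Finset.Icc l (r - 1), lam i * (y (k - r + i) - x (k - r + i))
          = c ^ j * -∑ i ∈ Finset.Icc l (r - 1), lam i * w (k - r + i) := by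
        rw [← Finset.sum_neg_distrib, Finset.mul_sum]
        refine Finset.sum_congr rfl fun i _ => ?_
        rw [show y (k - r + i) - x (k - r + i) = -(x (k - r + i) - y (k - r + i)) by ring,
          hw (k - r + i)]
        ring
      rw [hsum] at h1
      calc x k - y k = uinv * (lam r * (x k - y k)) := by rw [← mul_assoc, hu1, one_mul]
        _ = uinv * (c * (c ^ j * -∑ i ∈ Finset.Icc l (r - 1), lam i * w (k - r + i))) := by
            rw [h1]
        _ = c ^ (j + 1) * (uinv * -∑ i ∈ Finset.Icc l (r - 1), lam i * w (k - r + i)) := by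
            ring
  funext k
  obtain ⟨w, hw⟩ := claim K k
  rw [hcK, zero_mul] at hw
  exact sub_eq_zero.mp hw

theorem invIter_diff (y : ℤ → ZMod m) :
    ∀ j : ℕ, ∀ k : ℤ, ∃ w : ZMod m,
      invIter m l r lam uinv c y (j + 1) k - invIter m l r lam uinv c y j k = c ^ j * w := by
  intro j
  induction j with
  | zero => exact fun k => ⟨invIter m l r lam uinv c y 1 k, by simp [invIter]⟩
  | succ j ih =>
    choose w hw using ih
    intro k
    refine ⟨uinv * -∑ t ∈ Finset.Icc l (r - 1), lam t * w (k - r + t), ?_⟩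
    simp only [invIter]
    have hsum : ∑ t ∈ Finset.Icc l (r - 1), lam t * invIter m l r lam uinv c y (j + 1) (k - r + t)
        - ∑ t ∈ Finset.Icc l (r - 1), lam t * invIter m l r lam uinv c y j (k - r + t)
        = c ^ j * ∑ t ∈ Finset.Icc l (r - 1), lam t * w (k - r + t) := by
      rw [← Finset.sum_sub_distrib, Finset.mul_sum]
      refine Finset.sum_congr rfl fun t _ => ?_
      rw [← mul_sub, hw (k - r + t)]
      ring
    calc uinv * (y (k - r) - c * ∑ t ∈ Finset.Icc l (r - 1),
            lam t * invIter m l r lam uinv c y (j + 1) (k - r + t))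
          - uinv * (y (k - r) - c * ∑ t ∈ Finset.Icc l (r - 1),
            lam t * invIter m l r lam uinv c y j (k - r + t))
        = uinv * (-c) * (∑ t ∈ Finset.Icc l (r - 1),
            lam t * invIter m l r lam uinv c y (j + 1) (k - r + t)
          - ∑ t ∈ Finset.Icc l (r - 1),
            lam t * invIter m l r lam uinv c y j (k - r + t)) := by ring
      _ = uinv * (-c) * (c ^ j * ∑ t ∈ Finset.Icc l (r - 1), lam t * w (k - r + t)) := by
          rw [hsum]
      _ = c ^ (j + 1) * (uinv * -∑ t ∈ Finset.Icc l (r - 1), lam t * w (k - r + t)) := by ring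

theorem CAmap_rightInv (hu2 : lam r * uinv = 1) {K : ℕ} (hcK : c ^ K = 0) (y : ℤ → ZMod m) :
    CAmap m l r lam c (invIter m l r lam uinv c y K) = y := by
  have hfix : ∀ k, invIter m l r lam uinv c y (K + 1) k = invIter m l r lam uinv c y K k := by
    intro k
    obtain ⟨w, hw⟩ := invIter_diff y K k
    rw [hcK, zero_mul] at hw
    exact sub_eq_zero.mp hw
  funext n
  simp only [CAmap]
  have h1 : invIter m l r lam uinv c y K (n + r) = uinv * (y n - c * ∑ t ∈ Finset.Icc l (r - 1),
      lam t * invIter m l r lam uinv c y K (n + t)) := by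
    rw [← hfix (n + r)]
    simp only [invIter]
    have : n + r - r = n := by ring
    rw [this]
  rw [h1, ← mul_assoc, hu2, one_mul]
  ring

end Bij
noncomputable def solveA (m : ℕ) (l r : ℤ) (hl : 0 < l) (hlr : l < r) (lam : ℤ → ZMod m)
    (uinv c : ZMod m) (a : ℤ) (p w : ℤ → ZMod m) (i : ℤ) : ZMod m :=
  if i < a + r then p i
  else uinv * (w (i - r) - c * ∑ t ∈ (Finset.Icc l (r - 1)).attach,
      lam t.1 * solveA m l r hl hlr lam uinv c a p w (i - r + t.1))
termination_by (i - a).toNat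
decreasing_by
  · have ht := Finset.mem_Icc.mp t.2
    omega

section Key
variable {m : ℕ} {l r : ℤ} {lam : ℤ → ZMod m} {uinv c : ZMod m}

theorem solveA_spec (hl : 0 < l) (hlr : l < r) (hu1 : uinv * lam r = 1)
    (hu2 : lam r * uinv = 1) (a' a b : ℤ) (ha : a' ≤ a + l) (hab : a ≤ b)
    (p w x : ℤ → ZMod m) :
    (∀ i ∈ Finset.Icc a' (b + r), x i = solveA m l r hl hlr lam uinv c a p w i) ↔
      ((∀ i ∈ Finset.Icc a' (a + r - 1), x i = p i) ∧
       (∀ n ∈ Finset.Icc a b, CAmap m l r lam c x n = w n)) := by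
  constructor
  · intro h
    constructor
    · intro i hi
      rw [Finset.mem_Icc] at hi
      have hx := h i (Finset.mem_Icc.mpr ⟨hi.1, by omega⟩)
      rw [hx, solveA, if_pos (by omega : i < a + r)]
    · intro n hn
      rw [Finset.mem_Icc] at hn
      have hxr : x (n + r) = solveA m l r hl hlr lam uinv c a p w (n + r) :=
        h _ (Finset.mem_Icc.mpr ⟨by omega, by omega⟩)
      have hsum : ∀ t ∈ Finset.Icc l (r - 1),
          lam t * x (n + t) = lam t * solveA m l r hl hlr lam uinv c a p w (n + t) := by
        intro t ht
        rw [Finset.mem_Icc] at ht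
        rw [h _ (Finset.mem_Icc.mpr ⟨by omega, by omega⟩)]
      rw [CAmap, Finset.sum_congr rfl hsum, hxr, solveA,
        if_neg (by omega : ¬ n + r < a + r)]
      have h2 : n + r - r = n := by ring
      rw [h2, Finset.sum_attach (Finset.Icc l (r - 1))
        (fun t => lam t * solveA m l r hl hlr lam uinv c a p w (n + t))]
      rw [← mul_assoc, hu2, one_mul]
      ring
  · rintro ⟨hp, hw⟩
    have H : ∀ nm : ℕ, ∀ i, i ∈ Finset.Icc a' (b + r) → (i - a').toNat ≤ nm →
        x i = solveA m l r hl hlr lam uinv c a p w i := by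
      intro nm
      induction nm with
      | zero =>
        intro i hi hle
        rw [Finset.mem_Icc] at hi
        have : i = a' := by omega
        subst this
        rw [solveA, if_pos (by omega : i < a + r)]
        exact hp i (Finset.mem_Icc.mpr ⟨le_refl _, by omega⟩)
      | succ nm ih =>
        intro i hi hle
        rw [Finset.mem_Icc] at hi
        by_cases hir : i < a + r
        · rw [solveA, if_pos hir]
          exact hp i (Finset.mem_Icc.mpr ⟨hi.1, by omega⟩)
        · have hn := hw (i - r) (Finset.mem_Icc.mpr ⟨by omega, by omega⟩)
          rw [CAmap] at hn
          have h2 : i - r + r = i := by ring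
          rw [h2] at hn
          have hsum : ∀ t ∈ Finset.Icc l (r - 1),
              lam t * x (i - r + t)
                = lam t * solveA m l r hl hlr lam uinv c a p w (i - r + t) := by
            intro t ht
            rw [Finset.mem_Icc] at ht
            rw [ih (i - r + t) (Finset.mem_Icc.mpr ⟨by omega, by omega⟩) (by omega)]
          rw [Finset.sum_congr rfl hsum] at hn
          rw [solveA, if_neg hir,
            Finset.sum_attach (Finset.Icc l (r - 1))
              (fun t => lam t * solveA m l r hl hlr lam uinv c a p w (i - r + t))]
          calc x i = uinv * (lam r * x i) := by rw [← mul_assoc, hu1, one_mul]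
            _ = uinv * (w (i - r) - c * ∑ t ∈ Finset.Icc l (r - 1),
                lam t * solveA m l r hl hlr lam uinv c a p w (i - r + t)) := by
                rw [← hn]; ring
    intro i hi
    exact H ((i - a').toNat) i hi le_rfl
end Key
section Inv
variable {m : ℕ} [NeZero m] {l r : ℤ} {lam : ℤ → ZMod m} {uinv c : ZMod m}

theorem CAmap_measurable : Measurable (CAmap m l r lam c) := by
  refine measurable_pi_iff.mpr fun n => Measurable.add ?_ ?_
  · exact (Finset.measurable_sum _ fun i _ =>
      (measurable_pi_apply (X := fun _ : ℤ => ZMod m) (n + i)).const_mul (lam i)).const_mul c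
  · exact ((measurable_pi_apply (X := fun _ : ℤ => ZMod m) (n + r)).const_mul (lam r) :)

omit [NeZero m] in
theorem ennreal_aux (hm : m ≠ 0) (d e : ℕ) :
    ((m : ℝ≥0∞)) ^ d * ((m : ℝ≥0∞))⁻¹ ^ (d + e) = ((m : ℝ≥0∞))⁻¹ ^ e := by
  rw [pow_add, ← mul_assoc, ← mul_pow,
    ENNReal.mul_inv_cancel (by exact_mod_cast hm) (by simp), one_pow, one_mul]

theorem map_CAmap (hl : 0 < l) (hlr : l < r) (hu1 : uinv * lam r = 1)
    (hu2 : lam r * uinv = 1) (μ : Measure (ℤ → ZMod m)) [IsProbabilityMeasure μ]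
    (hμ : ∀ (a : ℤ) (s : ℕ) (j : ℕ → ZMod m),
      μ {x | ∀ t : ℕ, t ≤ s → x (a + (t : ℤ)) = j t} = ((m : ℝ≥0∞))⁻¹ ^ (s + 1)) :
    μ.map (CAmap m l r lam c) = μ := by
  haveI : IsProbabilityMeasure (μ.map (CAmap m l r lam c)) :=
    Measure.isProbabilityMeasure_map (CAmap_measurable (l := l) (r := r)).aemeasurable
  refine MeasureTheory.ext_of_generate_finite (cylC m) cylC_gen cylC_pi ?_ ?_
  · intro S hS
    rcases hS with rfl | ⟨k, v, rfl⟩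
    · simp
    rw [Measure.map_apply CAmap_measurable (cyl_measurable _ _ _)]
    classical
    set a' : ℤ := -(k : ℤ) + l with ha'
    have hpre : CAmap m l r lam c ⁻¹' {x | ∀ i ∈ Finset.Icc (-(k : ℤ)) (k : ℤ), x i = v i}
        = ⋃ q : ((Finset.Icc a' (-(k : ℤ) + r - 1) : Finset ℤ) → ZMod m),
          {x : ℤ → ZMod m | ∀ i ∈ Finset.Icc a' ((k : ℤ) + r),
            x i = solveA m l r hl hlr lam uinv c (-(k : ℤ))
              (fun j => if h : j ∈ Finset.Icc a' (-(k : ℤ) + r - 1) then q ⟨j, h⟩ else 0) v i} := by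
      ext x
      simp only [Set.mem_preimage, Set.mem_setOf_eq, Set.mem_iUnion]
      constructor
      · intro hx
        refine ⟨fun j => x j.1, ?_⟩
        refine (solveA_spec hl hlr hu1 hu2 a' (-(k : ℤ)) (k : ℤ) (by omega) (by omega)
          _ v x).mpr ⟨?_, ?_⟩
        · intro i hi
          have hi' : i ∈ Finset.Icc a' (-(k : ℤ) + r - 1) := by
            rw [Finset.mem_Icc] at hi ⊢; omega
          rw [dif_pos hi']
        · exact hx
      · rintro ⟨q, hq⟩
        exact ((solveA_spec hl hlr hu1 hu2 a' (-(k : ℤ)) (k : ℤ) (by omega) (by omega)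
          _ v x).mp hq).2
    rw [hpre]
    have hdisj : Pairwise (Function.onFun Disjoint fun
        q : ((Finset.Icc a' (-(k : ℤ) + r - 1) : Finset ℤ) → ZMod m) =>
          {x : ℤ → ZMod m | ∀ i ∈ Finset.Icc a' ((k : ℤ) + r),
            x i = solveA m l r hl hlr lam uinv c (-(k : ℤ))
              (fun j => if h : j ∈ Finset.Icc a' (-(k : ℤ) + r - 1) then q ⟨j, h⟩ else 0) v i}) := by
      intro q q' hne
      rw [Function.onFun, Set.disjoint_left]
      intro x hx hx'
      apply hne
      funext j
      have hj := Finset.mem_Icc.mp j.2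
      have hjm : j.1 ∈ Finset.Icc a' ((k : ℤ) + r) := by
        rw [Finset.mem_Icc]; omega
      have e1 := hx j.1 hjm
      have e2 := hx' j.1 hjm
      rw [solveA, if_pos (by omega : j.1 < -(k : ℤ) + r), dif_pos j.2] at e1 e2
      rw [← e1, ← e2]
    rw [measure_iUnion hdisj (fun q => cyl_measurable _ _ _)]
    have hval : ∀ q : ((Finset.Icc a' (-(k : ℤ) + r - 1) : Finset ℤ) → ZMod m),
        μ {x : ℤ → ZMod m | ∀ i ∈ Finset.Icc a' ((k : ℤ) + r),
            x i = solveA m l r hl hlr lam uinv c (-(k : ℤ))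
              (fun j => if h : j ∈ Finset.Icc a' (-(k : ℤ) + r - 1) then q ⟨j, h⟩ else 0) v i}
          = ((m : ℝ≥0∞))⁻¹ ^ ((r - l).toNat + (2 * k + 1)) := by
      intro q
      rw [cyl_measure μ hμ a' ((k : ℤ) + r) (by omega) _]
      congr 1
      omega
    simp only [hval]
    rw [tsum_fintype, Finset.sum_const, Finset.card_univ, nsmul_eq_mul]
    have hcard : (Fintype.card ((Finset.Icc a' (-(k : ℤ) + r - 1) : Finset ℤ) → ZMod m) : ℝ≥0∞)
        = ((m : ℝ≥0∞)) ^ (r - l).toNat := by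
      rw [Fintype.card_fun, ZMod.card, Fintype.card_coe, Int.card_Icc]
      push_cast
      congr 2
      omega
    rw [hcard, ennreal_aux (NeZero.ne m), cyl_measure μ hμ (-(k : ℤ)) (k : ℤ) (by omega) v]
    congr 1
    omega
  · rw [Measure.map_apply CAmap_measurable MeasurableSet.univ, Set.preimage_univ]

end Inv
theorem radical_pow_eq_zero (m : ℕ) [NeZero m] :
    ((((∏ q ∈ m.primeFactors, q : ℕ)) : ZMod m)) ^ m = 0 := by
  have hm : m ≠ 0 := NeZero.ne m
  have hdvd : m ∣ (∏ q ∈ m.primeFactors, q) ^ m := by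
    have h1 : m = ∏ p ∈ m.primeFactors, p ^ (m.factorization p) := by
      conv_lhs => rw [← Nat.factorization_prod_pow_eq_self hm]
      rw [Finsupp.prod, Nat.support_factorization]
    rw [← Finset.prod_pow]
    calc m = ∏ p ∈ m.primeFactors, p ^ (m.factorization p) := h1
      _ ∣ ∏ p ∈ m.primeFactors, p ^ m :=
        Finset.prod_dvd_prod_of_dvd _ _ fun p _ =>
          pow_dvd_pow p (le_of_lt (Nat.factorization_lt p hm))
  rw [← Nat.cast_pow]
  exact (ZMod.natCast_eq_zero_iff _ m).mpr hdvd

section Equiv2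
variable {m : ℕ} {l r : ℤ} {lam : ℤ → ZMod m} {uinv c : ZMod m}

/-- The CA as an equivalence. -/
noncomputable def CAequiv (m : ℕ) (l r : ℤ) (lam : ℤ → ZMod m) (uinv c : ZMod m)
    (hu1 : uinv * lam r = 1) (hu2 : lam r * uinv = 1) (K : ℕ) (hcK : c ^ K = 0) :
    Equiv.Perm (ℤ → ZMod m) where
  toFun := CAmap m l r lam c
  invFun := fun y => invIter m l r lam uinv c y K
  left_inv := fun x => CAmap_injective hu1 hcK
    (by rw [CAmap_rightInv hu2 hcK (CAmap m l r lam c x)])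
  right_inv := fun y => CAmap_rightInv hu2 hcK y

theorem measurable_invIter (K : ℕ) :
    Measurable (fun y => invIter m l r lam uinv c y K) := by
  refine measurable_pi_iff.mpr fun k => ?_
  induction K generalizing k with
  | zero => simpa [invIter] using measurable_const
  | succ j ih =>
    simp only [invIter]
    refine Measurable.const_mul (Measurable.sub ?_ (Measurable.const_mul ?_ c)) uinv
    · exact measurable_pi_apply (X := fun _ : ℤ => ZMod m) (k - r)
    · exact Finset.measurable_sum _ fun t _ => (ih (k - r + t)).const_mul (lam t)

theorem CAequiv_mp (hl : 0 < l) (hlr : l < r)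
    (hu1 : uinv * lam r = 1) (hu2 : lam r * uinv = 1) (K : ℕ) (hcK : c ^ K = 0)
    (μ : Measure (ℤ → ZMod m)) [NeZero m] [IsProbabilityMeasure μ]
    (hμ : ∀ (a : ℤ) (s : ℕ) (j : ℕ → ZMod m),
      μ {x | ∀ t : ℕ, t ≤ s → x (a + (t : ℤ)) = j t} = ((m : ℝ≥0∞))⁻¹ ^ (s + 1)) :
    ∀ z : ℤ, MeasureTheory.MeasurePreserving
      (⇑((CAequiv m l r lam uinv c hu1 hu2 K hcK) ^ z)) μ μ := by
  set E := CAequiv m l r lam uinv c hu1 hu2 K hcK with hE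
  have h1 : MeasureTheory.MeasurePreserving (⇑E) μ μ :=
    ⟨CAmap_measurable, map_CAmap hl hlr hu1 hu2 μ hμ⟩
  have h1' : MeasureTheory.MeasurePreserving (⇑E⁻¹) μ μ := by
    have hEm : Measurable (⇑E.symm) := measurable_invIter K
    refine ⟨hEm, ?_⟩
    rw [show (⇑E⁻¹) = ⇑E.symm from rfl]
    have := MeasureTheory.MeasurePreserving.symm
      (e := MeasurableEquiv.mk E (measurable_toFun := h1.measurable) (measurable_invFun := hEm)) h1
    exact this.map_eq
  intro z
  induction z using Int.induction_on with
  | zero => simpa using MeasureTheory.MeasurePreserving.id μ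
  | succ n ihn =>
    have : E ^ ((n : ℤ) + 1) = E ^ (n : ℤ) * E := by rw [zpow_add_one]
    rw [this]
    exact ihn.comp h1
  | pred n ihn =>
    have : E ^ (-(n : ℤ) - 1) = E ^ (-(n : ℤ)) * E⁻¹ := by rw [zpow_sub_one]
    rw [this]
    exact ihn.comp h1'

end Equiv2
section Vfun
variable {m : ℕ} {l r : ℤ} {lam : ℤ → ZMod m} {uinv c : ZMod m}

/-- Extension of a block to `ℤ`. -/
def extB (m R : ℕ) (b0 : Fin R → ZMod m) : ℤ → ZMod m :=
  fun i => if h : 0 ≤ i ∧ i < (R : ℤ) then b0 ⟨i.toNat, by omega⟩ else 0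

noncomputable def vfun (m : ℕ) (l r : ℤ) (hl : 0 < l) (hlr : l < r) (lam : ℤ → ZMod m)
    (uinv c : ZMod m) (R : ℕ) : (ℕ → Fin R → ZMod m) → ℕ → ℤ → ZMod m
  | b, 0 => extB m R (b 0)
  | b, (s + 1) => solveA m l r hl hlr lam uinv c 0 (extB m R (b 0))
      (vfun m l r hl hlr lam uinv c R (fun t => b (t + 1)) s)

noncomputable def Ffun (m : ℕ) (l r : ℤ) (hl : 0 < l) (hlr : l < r) (lam : ℤ → ZMod m)
    (uinv c : ZMod m) (R : ℕ) (b : ℕ → Fin R → ZMod m) : ℤ → ZMod m :=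
  fun k => vfun m l r hl hlr lam uinv c R b k.toNat k

theorem extB_spec (R : ℕ) (hR : (R : ℤ) = r) (b0 : Fin R → ZMod m) (x : ℤ → ZMod m) :
    (∀ i ∈ Finset.Icc (0 : ℤ) (r - 1), x i = extB m R b0 i) ↔
      (∀ i : Fin R, x (i : ℤ) = b0 i) := by
  constructor
  · intro h i
    have hi : ((i : ℕ) : ℤ) ∈ Finset.Icc (0 : ℤ) (r - 1) := by
      rw [Finset.mem_Icc]
      have := i.2
      omega
    have h2 := h _ hi
    simp only [extB] at h2
    have hc : (0 : ℤ) ≤ ((i : ℕ) : ℤ) ∧ ((i : ℕ) : ℤ) < (R : ℤ) := by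
      have := i.2; omega
    rw [dif_pos hc] at h2
    simpa using h2
  · intro h i hi
    rw [Finset.mem_Icc] at hi
    rw [extB, dif_pos (by omega)]
    have := h ⟨i.toNat, by omega⟩
    rw [← this]
    congr 1
    show i = ((i.toNat : ℕ) : ℤ)
    omega

theorem CA_iter_local (hl : 0 < l) (hlr : l < r) : ∀ (n : ℕ) (x y : ℤ → ZMod m) (k : ℤ),
    (∀ i ∈ Finset.Icc (k + n * l) (k + n * r), x i = y i) →
    (CAmap m l r lam c)^[n] x k = (CAmap m l r lam c)^[n] y k := by
  intro n
  induction n with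
  | zero =>
    intro x y k h
    exact h k (by rw [Finset.mem_Icc]; omega)
  | succ n ih =>
    intro x y k h
    rw [Function.iterate_succ_apply, Function.iterate_succ_apply]
    refine ih _ _ k fun i hi => ?_
    rw [Finset.mem_Icc] at hi
    simp only [CAmap]
    have h1 : ∀ t ∈ Finset.Icc l (r - 1), lam t * x (i + t) = lam t * y (i + t) := by
      intro t ht
      rw [Finset.mem_Icc] at ht
      rw [h (i + t) (by rw [Finset.mem_Icc]; push_cast; constructor <;> nlinarith [hi.1, hi.2, ht.1, ht.2, hl, hlr])]
    rw [Finset.sum_congr rfl h1,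
      h (i + r) (by rw [Finset.mem_Icc]; push_cast; constructor <;> nlinarith [hi.1, hi.2, hl, hlr])]

theorem vfun_spec (hl : 0 < l) (hlr : l < r) (hu1 : uinv * lam r = 1)
    (hu2 : lam r * uinv = 1) (R : ℕ) (hR : (R : ℤ) = r) :
    ∀ (s : ℕ) (b : ℕ → Fin R → ZMod m) (x : ℤ → ZMod m),
    (∀ i ∈ Finset.Icc (0 : ℤ) (((s : ℤ) + 1) * r - 1),
        x i = vfun m l r hl hlr lam uinv c R b s i) ↔
      (∀ t : ℕ, t ≤ s → ∀ i : Fin R, (CAmap m l r lam c)^[t] x (i : ℤ) = b t i) := by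
  intro s
  induction s with
  | zero =>
    intro b x
    have h0 : ((0 : ℤ) + 1) * r - 1 = r - 1 := by ring
    rw [show (((0 : ℕ) : ℤ) + 1) * r - 1 = r - 1 by push_cast; ring]
    rw [show (vfun m l r hl hlr lam uinv c R b 0) = extB m R (b 0) from rfl]
    rw [extB_spec R hR (b 0) x]
    constructor
    · intro h t ht i
      interval_cases t
      simpa using h i
    · intro h i
      simpa using h 0 (le_refl 0) i
  | succ s ih =>
    intro b x
    have hkey := solveA_spec (c := c) hl hlr hu1 hu2 0 0 (((s : ℤ) + 1) * r - 1)
      (by omega) (by have hs : (0:ℤ) ≤ (s:ℤ) := Int.natCast_nonneg s; nlinarith) (extB m R (b 0))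
      (vfun m l r hl hlr lam uinv c R (fun t => b (t + 1)) s) x
    have hint : (((s : ℕ) + 1 : ℕ) : ℤ) + 1 = (s : ℤ) + 2 := by push_cast; ring
    have hend : (((s : ℤ) + 2)) * r - 1 = ((s : ℤ) + 1) * r - 1 + r := by ring
    rw [show (vfun m l r hl hlr lam uinv c R b (s + 1))
        = solveA m l r hl hlr lam uinv c 0 (extB m R (b 0))
          (vfun m l r hl hlr lam uinv c R (fun t => b (t + 1)) s) from rfl]
    rw [show ((((s + 1 : ℕ)) : ℤ) + 1) * r - 1 = ((s : ℤ) + 1) * r - 1 + r by push_cast; ring]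
    rw [hkey]
    have hpre := extB_spec (m := m) R hR (b 0) x
    rw [show (0 : ℤ) + r - 1 = r - 1 by ring, hpre]
    have hih := ih (fun t => b (t + 1)) (CAmap m l r lam c x)
    rw [hih]
    constructor
    · rintro ⟨h0, hs⟩ t ht i
      match t with
      | 0 => simpa using h0 i
      | (t + 1) =>
        rw [Function.iterate_succ_apply]
        exact hs t (by omega) i
    · intro h
      refine ⟨fun i => by simpa using h 0 (by omega) i, fun t ht i => ?_⟩
      rw [← Function.iterate_succ_apply]
      exact h (t + 1) (by omega) i

theorem Ffun_eq (hl : 0 < l) (hlr : l < r) (hu1 : uinv * lam r = 1)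
    (hu2 : lam r * uinv = 1) (R : ℕ) (hR : (R : ℤ) = r)
    (x : ℤ → ZMod m) (b : ℕ → Fin R → ZMod m)
    (hb : ∀ t : ℕ, ∀ i : Fin R, (CAmap m l r lam c)^[t] x (i : ℤ) = b t i)
    (k : ℤ) (hk : 0 ≤ k) : Ffun m l r hl hlr lam uinv c R b k = x k := by
  have h := (vfun_spec hl hlr hu1 hu2 R hR k.toNat b x).mpr (fun t _ i => hb t i)
  have hk2 : k ∈ Finset.Icc (0 : ℤ) (((k.toNat : ℤ) + 1) * r - 1) := by
    rw [Finset.mem_Icc]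
    have h1 : ((k.toNat : ℤ) + 1) * 1 ≤ ((k.toNat : ℤ) + 1) * r := by
      apply mul_le_mul_of_nonneg_left (by omega) (by omega)
    omega
  rw [Ffun, ← h k hk2]

end Vfun
section MeasAux
variable {m : ℕ} {l r : ℤ} {lam : ℤ → ZMod m} {uinv c : ZMod m}
variable {Ω : Type*} [MeasurableSpace Ω]

theorem measurable_solveA (hl : 0 < l) (hlr : l < r) (a : ℤ) (p w : Ω → ℤ → ZMod m)
    (hp : ∀ i, Measurable fun ω => p ω i) (hw : ∀ i, Measurable fun ω => w ω i) :
    ∀ i, Measurable fun ω => solveA m l r hl hlr lam uinv c a (p ω) (w ω) i := by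
  have H : ∀ nm : ℕ, ∀ i : ℤ, (i - a).toNat ≤ nm →
      Measurable fun ω => solveA m l r hl hlr lam uinv c a (p ω) (w ω) i := by
    intro nm
    induction nm with
    | zero =>
      intro i hle
      have hir : i < a + r := by omega
      have he : (fun ω => solveA m l r hl hlr lam uinv c a (p ω) (w ω) i)
          = fun ω => p ω i := by
        funext ω; rw [solveA, if_pos hir]
      rw [he]; exact hp i
    | succ nm ih =>
      intro i hle
      by_cases hir : i < a + r
      · have he : (fun ω => solveA m l r hl hlr lam uinv c a (p ω) (w ω) i)
            = fun ω => p ω i := by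
          funext ω; rw [solveA, if_pos hir]
        rw [he]; exact hp i
      · have he : (fun ω => solveA m l r hl hlr lam uinv c a (p ω) (w ω) i)
            = fun ω => uinv * (w ω (i - r) - c * ∑ t ∈ (Finset.Icc l (r - 1)).attach,
              lam t.1 * solveA m l r hl hlr lam uinv c a (p ω) (w ω) (i - r + t.1)) := by
          funext ω; rw [solveA, if_neg hir]
        rw [he]
        refine Measurable.const_mul (Measurable.sub (hw (i - r))
          (Measurable.const_mul ?_ c)) uinv
        refine Finset.measurable_sum _ fun t _ => Measurable.const_mul ?_ (lam t.1)
        have ht := Finset.mem_Icc.mp t.2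
        exact ih (i - r + t.1) (by omega)
  exact fun i => H (i - a).toNat i le_rfl

theorem measurable_extB (R : ℕ) (b : Ω → Fin R → ZMod m)
    (hb : ∀ i, Measurable fun ω => b ω i) :
    ∀ i, Measurable fun ω => extB m R (b ω) i := by
  intro i
  by_cases h : 0 ≤ i ∧ i < (R : ℤ)
  · have he : (fun ω => extB m R (b ω) i) = fun ω => b ω ⟨i.toNat, by omega⟩ := by
      funext ω; rw [extB, dif_pos h]
    rw [he]; exact hb _
  · have he : (fun ω => extB m R (b ω) i) = fun _ => 0 := by
      funext ω; rw [extB, dif_neg h]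
    rw [he]; exact measurable_const

theorem measurable_vfun (hl : 0 < l) (hlr : l < r) (R : ℕ) :
    ∀ (s : ℕ) (b : Ω → ℕ → Fin R → ZMod m),
      (∀ t i, Measurable fun ω => b ω t i) →
      ∀ k, Measurable fun ω => vfun m l r hl hlr lam uinv c R (b ω) s k := by
  intro s
  induction s with
  | zero =>
    intro b hb k
    exact measurable_extB R (fun ω => b ω 0) (hb 0) k
  | succ s ih =>
    intro b hb k
    have he : (fun ω => vfun m l r hl hlr lam uinv c R (b ω) (s + 1) k)
        = fun ω => solveA m l r hl hlr lam uinv c 0 (extB m R (b ω 0))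
            (vfun m l r hl hlr lam uinv c R (fun t => b ω (t + 1)) s) k := by
      funext ω; rfl
    rw [he]
    exact measurable_solveA hl hlr 0 _ _
      (measurable_extB R (fun ω => b ω 0) (hb 0))
      (ih (fun ω t => b ω (t + 1)) (fun t i => hb (t + 1) i)) k

theorem measurable_CA_iter (g : Ω → ℤ → ZMod m)
    (hg : ∀ k, Measurable fun ω => g ω k) :
    ∀ (n : ℕ) (k : ℤ), Measurable fun ω => (CAmap m l r lam c)^[n] (g ω) k := by
  intro n
  induction n generalizing g hg with
  | zero => exact fun k => hg k
  | succ n ih =>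
    intro k
    have he : (fun ω => (CAmap m l r lam c)^[n + 1] (g ω) k)
        = fun ω => (CAmap m l r lam c)^[n] (CAmap m l r lam c (g ω)) k := by
      funext ω; rw [Function.iterate_succ_apply]
    rw [he]
    refine ih (fun ω => CAmap m l r lam c (g ω)) (fun k' => ?_) k
    simp only [CAmap]
    refine Measurable.add (Measurable.const_mul ?_ c)
      (Measurable.const_mul (hg (k' + r)) (lam r))
    exact Finset.measurable_sum _ fun t _ => (hg (k' + t)).const_mul (lam t)

end MeasAux
instance (n : ℕ) : MeasurableSingletonClass (Fin n) :=
  ⟨fun _ => MeasurableSpace.measurableSet_top⟩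

/-- Let `m = p₁^{k₁} ⋯ p_h^{k_h}` and `f(x_l,...,x_r) = (p₁p₂⋯p_h)·Σ_{i=l}^{r-1} λ_i x_i
+ λ_r x_r (mod m)` (the factor being the product of the distinct prime factors of `m`),
with `gcd(λ_r, m) = 1` (i.e. `λ_r` is a unit of `ZMod m`) and `0 < l < r`. Then the CA
`T_{f[l,r]}` over `ZMod m` is invertible and is a Bernoulli automorphism with respect to
the uniform Bernoulli measure `μ`: it is measure-theoretically isomorphic (mod 0) to a
Bernoulli shift. -/
theorem stmt18 (m : ℕ) (hm : 2 ≤ m) (l r : ℤ) (hl : 0 < l) (hlr : l < r)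
    (lam : ℤ → ZMod m) (hunit : IsUnit (lam r))
    (T : (ℤ → ZMod m) → ℤ → ZMod m)
    (hT : ∀ x n, T x n =
      ((∏ q ∈ m.primeFactors, q : ℕ) : ZMod m) * ∑ i ∈ Finset.Icc l (r - 1), lam i * x (n + i)
        + lam r * x (n + r))
    (μ : Measure (ℤ → ZMod m)) [IsProbabilityMeasure μ]
    (hμ : ∀ (a : ℤ) (s : ℕ) (j : ℕ → ZMod m),
      μ {x | ∀ t : ℕ, t ≤ s → x (a + (t : ℤ)) = j t} = ((m : ℝ≥0∞))⁻¹ ^ (s + 1)) :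
    Function.Bijective T ∧
    ∃ (N : ℕ) (_ : 0 < N) (q : Fin N → ℝ≥0∞) (_ : ∑ a : Fin N, q a = 1)
      (ν : Measure (ℤ → Fin N)) (_ : IsProbabilityMeasure ν)
      (_ : ∀ (a : ℤ) (s : ℕ) (j : ℕ → Fin N),
        ν {y | ∀ t : ℕ, t ≤ s → y (a + (t : ℤ)) = j t} = ∏ t ∈ Finset.range (s + 1), q (j t))
      (φ : (ℤ → ZMod m) → ℤ → Fin N) (ψ : (ℤ → Fin N) → ℤ → ZMod m),
      MeasurePreserving φ μ ν ∧ MeasurePreserving ψ ν μ ∧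
      (∀ᵐ x ∂μ, ψ (φ x) = x) ∧ (∀ᵐ y ∂ν, φ (ψ y) = y) ∧
      (∀ᵐ x ∂μ, φ (T x) = fun n => φ x (n + 1)) := by
  haveI : NeZero m := ⟨by omega⟩
  classical
  set c : ZMod m := ((∏ q ∈ m.primeFactors, q : ℕ) : ZMod m) with hc
  obtain ⟨U, hU⟩ := hunit
  set uinv : ZMod m := ↑U⁻¹ with huinv
  have hu1 : uinv * lam r = 1 := by rw [← hU]; exact U.inv_mul
  have hu2 : lam r * uinv = 1 := by rw [← hU]; exact U.mul_inv
  have hcK : c ^ m = 0 := radical_pow_eq_zero m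
  have hTeq : T = CAmap m l r lam c := by funext x n; rw [hT x n]; rfl
  subst hTeq
  set E : Equiv.Perm (ℤ → ZMod m) := CAequiv m l r lam uinv c hu1 hu2 m hcK with hE
  have hEcoe : ⇑E = CAmap m l r lam c := rfl
  have hMP : ∀ z : ℤ, MeasurePreserving (⇑(E ^ z)) μ μ :=
    CAequiv_mp hl hlr hu1 hu2 m hcK μ hμ
  have hEnat : ∀ (t : ℕ) (x : ℤ → ZMod m), (E ^ (t : ℤ)) x = (CAmap m l r lam c)^[t] x := by
    intro t x
    rw [zpow_natCast, show ⇑(E ^ t) = (⇑E)^[t] from Equiv.Perm.coe_pow E t, hEcoe]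
  refine ⟨E.bijective, ?_⟩
  set R : ℕ := r.toNat with hRdef
  have hR : (R : ℤ) = r := Int.toNat_of_nonneg (by omega)
  set N : ℕ := m ^ R with hNdef
  have hN0 : 0 < N := pow_pos (by omega) R
  have hcard : Fintype.card (Fin R → ZMod m) = N := by
    rw [Fintype.card_fun, ZMod.card, Fintype.card_fin, hNdef]
  set e : (Fin R → ZMod m) ≃ Fin N := Fintype.equivFinOfCardEq hcard with he
  set φ : (ℤ → ZMod m) → ℤ → Fin N :=
    fun x n => e (fun i : Fin R => (E ^ n) x (i : ℤ)) with hφdef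
  have hφm : Measurable φ := by
    refine measurable_pi_iff.mpr fun n => ?_
    refine (measurable_of_countable (fun v : Fin R → ZMod m => e v)).comp ?_
    refine measurable_pi_iff.mpr fun i => ?_
    exact (measurable_pi_apply (X := fun _ : ℤ => ZMod m) ((i : ℕ) : ℤ)).comp (hMP n).measurable
  set ν : Measure (ℤ → Fin N) := μ.map φ with hνdef
  haveI hνprob : IsProbabilityMeasure ν := Measure.isProbabilityMeasure_map hφm.aemeasurable
  set q : Fin N → ℝ≥0∞ := fun _ => ((N : ℝ≥0∞))⁻¹ with hqdef
  have hq : ∑ a : Fin N, q a = 1 := by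
    rw [hqdef, Finset.sum_const, Finset.card_univ, Fintype.card_fin, nsmul_eq_mul,
      ENNReal.mul_inv_cancel (by exact_mod_cast hN0.ne') (by simp)]
  -- measurability of target cylinders
  have hScyl : ∀ (a : ℤ) (s : ℕ) (j : ℕ → Fin N),
      MeasurableSet {y : ℤ → Fin N | ∀ t : ℕ, t ≤ s → y (a + (t : ℤ)) = j t} := by
    intro a s j
    have hs : {y : ℤ → Fin N | ∀ t : ℕ, t ≤ s → y (a + (t : ℤ)) = j t}
        = ⋂ (t : ℕ) (_ : t ≤ s), (fun y : ℤ → Fin N => y (a + (t : ℤ))) ⁻¹' {j t} := by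
      ext y; simp [Set.mem_iInter]
    rw [hs]
    exact MeasurableSet.iInter fun t => MeasurableSet.iInter fun _ =>
      (measurable_pi_apply _) (measurableSet_singleton _)
  -- the ν-cylinder computation
  have hν : ∀ (a : ℤ) (s : ℕ) (j : ℕ → Fin N),
      ν {y | ∀ t : ℕ, t ≤ s → y (a + (t : ℤ)) = j t}
        = ∏ t ∈ Finset.range (s + 1), q (j t) := by
    intro a s j
    rw [hνdef, Measure.map_apply hφm (hScyl a s j)]
    have hrs : (0 : ℤ) ≤ ((s : ℤ) + 1) * r - 1 := by
      have hs0 : (0 : ℤ) ≤ (s : ℤ) := Int.natCast_nonneg s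
      nlinarith
    have hstep : φ ⁻¹' {y | ∀ t : ℕ, t ≤ s → y (a + (t : ℤ)) = j t}
        = ⇑(E ^ a) ⁻¹' {y : ℤ → ZMod m | ∀ i ∈ Finset.Icc (0 : ℤ) (((s : ℤ) + 1) * r - 1),
            y i = vfun m l r hl hlr lam uinv c R (fun t => e.symm (j t)) s i} := by
      ext x
      simp only [Set.mem_preimage, Set.mem_setOf_eq]
      rw [vfun_spec hl hlr hu1 hu2 R hR s (fun t => e.symm (j t)) ((E ^ a) x)]
      constructor
      · intro h t ht i
        have h1 := h t ht
        simp only [hφdef] at h1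
        have h2 : (fun i : Fin R => (E ^ (a + (t : ℤ))) x (i : ℤ)) = e.symm (j t) := by
          rw [← h1]; exact (e.symm_apply_apply _).symm
        have h3 := congrFun h2 i
        rw [← h3, show a + (t : ℤ) = (t : ℤ) + a from add_comm _ _, zpow_add,
          Equiv.Perm.mul_apply, hEnat]
      · intro h t ht
        simp only [hφdef]
        have h2 : (fun i : Fin R => (E ^ (a + (t : ℤ))) x (i : ℤ)) = e.symm (j t) := by
          funext i
          rw [show a + (t : ℤ) = (t : ℤ) + a from add_comm _ _, zpow_add,
            Equiv.Perm.mul_apply, hEnat]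
          exact h t ht i
        rw [h2, Equiv.apply_symm_apply]
    rw [hstep, (hMP a).measure_preimage (cyl_measurable _ _ _).nullMeasurableSet,
      cyl_measure μ hμ 0 (((s : ℤ) + 1) * r - 1) hrs]
    have hexp : (((s : ℤ) + 1) * r - 1 + 1 - 0).toNat = (s + 1) * R := by
      have : ((s : ℤ) + 1) * r - 1 + 1 - 0 = (((s + 1) * R : ℕ) : ℤ) := by
        push_cast [hR]; ring
      rw [this, Int.toNat_natCast]
    rw [hexp, hqdef, Finset.prod_const, Finset.card_range, hNdef, Nat.cast_pow,
      ENNReal.inv_pow, ← pow_mul, Nat.mul_comm R (s + 1)]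
  -- ψ
  set ψ : (ℤ → Fin N) → ℤ → ZMod m := fun β k =>
    if 0 ≤ k then Ffun m l r hl hlr lam uinv c R (fun t => e.symm (β ((t : ℕ) : ℤ))) k
    else (CAmap m l r lam c)^[(-k).toNat]
      (Ffun m l r hl hlr lam uinv c R (fun t => e.symm (β (((t : ℕ) : ℤ) + k)))) k
    with hψdef
  have hψφ : ∀ x, ψ (φ x) = x := by
    intro x
    funext k
    simp only [hψdef]
    by_cases hk : 0 ≤ k
    · rw [if_pos hk]
      refine Ffun_eq hl hlr hu1 hu2 R hR x _ (fun t i => ?_) k hk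
      simp only [hφdef]
      show (CAmap m l r lam c)^[t] x (i : ℤ)
        = e.symm (e fun i : Fin R => (E ^ ((t : ℕ) : ℤ)) x (i : ℤ)) i
      rw [Equiv.symm_apply_apply, hEnat]
    · rw [if_neg hk]
      have hn : (((-k).toNat : ℕ) : ℤ) = -k := by omega
      set w : ℤ → ZMod m := (E ^ k) x with hw
      have hb : ∀ (t : ℕ) (i : Fin R),
          (CAmap m l r lam c)^[t] w (i : ℤ) = e.symm (φ x (((t : ℕ) : ℤ) + k)) i := by
        intro t i
        simp only [hφdef]
        show (CAmap m l r lam c)^[t] w (i : ℤ)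
          = e.symm (e fun i : Fin R => (E ^ (((t : ℕ) : ℤ) + k)) x (i : ℤ)) i
        rw [Equiv.symm_apply_apply, zpow_add, Equiv.Perm.mul_apply, hEnat, hw]
      have hloc := CA_iter_local (c := c) (lam := lam) hl hlr ((-k).toNat)
        (Ffun m l r hl hlr lam uinv c R (fun t => e.symm (φ x (((t : ℕ) : ℤ) + k)))) w k
      rw [hloc ?_]
      · rw [← hEnat ((-k).toNat) w, hw, ← Equiv.Perm.mul_apply, ← zpow_add]
        have : (((-k).toNat : ℕ) : ℤ) + k = 0 := by omega
        rw [this, zpow_zero, Equiv.Perm.coe_one, id_eq]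
      · intro i hi
        rw [Finset.mem_Icc, hn] at hi
        have hi0 : 0 ≤ i := by
          have h2 : (1 : ℤ) ≤ l := hl
          have h3 : (0 : ℤ) ≤ -k := by omega
          have h4 := mul_le_mul_of_nonneg_left h2 h3
          omega
        exact Ffun_eq hl hlr hu1 hu2 R hR w _ hb i hi0
  have hψm : Measurable ψ := by
    refine measurable_pi_iff.mpr fun k => ?_
    have hbmeas : ∀ (σ : ℕ → ℤ) (t : ℕ) (i : Fin R),
        Measurable fun β : ℤ → Fin N => e.symm (β (σ t)) i := by
      intro σ t i
      exact (measurable_of_countable (fun v : Fin N => e.symm v i)).comp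
        (measurable_pi_apply (X := fun _ : ℤ => Fin N) (σ t))
    by_cases hk : 0 ≤ k
    · have heq : (fun β => ψ β k)
          = fun β => vfun m l r hl hlr lam uinv c R
              (fun t => e.symm (β ((t : ℕ) : ℤ))) k.toNat k := by
        funext β; simp only [hψdef]; simp only [if_pos hk]; rfl
      rw [heq]
      exact measurable_vfun hl hlr R k.toNat _ (hbmeas fun t => ((t : ℕ) : ℤ)) k
    · have heq : (fun β => ψ β k)
          = fun β => (CAmap m l r lam c)^[(-k).toNat]
              (Ffun m l r hl hlr lam uinv c R (fun t => e.symm (β (((t : ℕ) : ℤ) + k)))) k := by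
        funext β; simp only [hψdef]; simp only [if_neg hk]
      rw [heq]
      refine measurable_CA_iter _ (fun k' => ?_) ((-k).toNat) k
      exact measurable_vfun hl hlr R k'.toNat _ (hbmeas fun t => ((t : ℕ) : ℤ) + k) k'
  have hmpφ : MeasurePreserving φ μ ν := ⟨hφm, hνdef.symm⟩
  have hmpψ : MeasurePreserving ψ ν μ := by
    refine ⟨hψm, ?_⟩
    rw [hνdef, Measure.map_map hψm hφm]
    have : ψ ∘ φ = id := funext hψφ
    rw [this, Measure.map_id]
  refine ⟨N, hN0, q, hq, ν, hνprob, hν, φ, ψ, hmpφ, hmpψ, ?_, ?_, ?_⟩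
  · exact MeasureTheory.ae_of_all μ hψφ
  · have hms : MeasurableSet {y : ℤ → Fin N | φ (ψ y) = y} := by
      have hy : {y : ℤ → Fin N | φ (ψ y) = y}
          = ⋂ (n : ℤ), {y : ℤ → Fin N | φ (ψ y) n = y n} := by
        ext y; simp [funext_iff, Set.mem_iInter]
      rw [hy]
      refine MeasurableSet.iInter fun n => ?_
      exact measurableSet_eq_fun
        ((measurable_pi_apply n).comp (hφm.comp hψm)) (measurable_pi_apply n)
    rw [hνdef, MeasureTheory.ae_map_iff hφm.aemeasurable hms]
    refine MeasureTheory.ae_of_all μ fun x => ?_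
    show φ (ψ (φ x)) = φ x
    rw [hψφ x]
  · refine MeasureTheory.ae_of_all μ fun x => ?_
    funext n
    simp only [hφdef]
    show e (fun i : Fin R => (E ^ n) (CAmap m l r lam c x) (i : ℤ))
      = e (fun i : Fin R => (E ^ (n + 1)) x (i : ℤ))
    congr 1
    funext i
    rw [zpow_add_one, Equiv.Perm.mul_apply, hEcoe]
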